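/- arXiv:1108.1763 — 2 statements merged into one kernel-verified Lean document; each statement's English description precedes it below -/
import Mathlib

section
/- Let α ∈ F_{3^n} \ {1, −1} be θ-periodic. Then the equation θ(β) = α has exactly two solutions β₁, β₂ ∈ F_{3^n}: one solution β₁ is θ-periodic (ψ(β₁) has odd order) and the other solution β₂ is not θ-periodic, with ord(ψ(β₂)) = 2·ord(ψ(β₁)). -/
open OnePoint

variable (F : Type*) [Field F] [DecidableEq F]

/-- The map `θ(x) = x + x⁻¹`, with `θ(0) = θ(∞) = ∞`. -/
def theta : OnePoint F → OnePoint F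
  | Option.some x => if x = 0 then ∞ else Option.some (x + x⁻¹)
  | Option.none => ∞

/-- The inverse-square map `s(x) = x⁻²`, with `s(0) = ∞`, `s(∞) = 0`. -/
def sMap : OnePoint F → OnePoint F
  | Option.some x => if x = 0 then ∞ else Option.some (x⁻¹ ^ 2)
  | Option.none => Option.some 0

/-- The involution `ψ(x) = (x+1)/(x-1)`, with `ψ(1) = ∞`, `ψ(∞) = 1`. -/
def psi : OnePoint F → OnePoint F
  | Option.some x => if x = 1 then ∞ else Option.some ((x + 1) / (x - 1))
  | Option.none => Option.some 1

variable {F}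

lemma psi_invol (h2 : (2:F) ≠ 0) (x : OnePoint F) : psi F (psi F x) = x := by
  match x with
  | Option.none =>
    have h : psi F (Option.none : OnePoint F) = Option.some 1 := rfl
    rw [h]
    simp only [psi, if_pos rfl]
    rfl
  | Option.some x =>
    by_cases hx : x = 1
    · subst hx
      rw [show psi F (Option.some (1:F)) = ∞ by simp [psi]]
      rfl
    · have hx1 : x - 1 ≠ 0 := sub_ne_zero.mpr hx
      have hne : (x+1)/(x-1) ≠ 1 := by
        intro h
        rw [div_eq_one_iff_eq hx1] at h
        exact h2 (by linear_combination h)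
      rw [show psi F (Option.some x) = Option.some ((x+1)/(x-1)) from if_neg hx,
        show psi F (Option.some ((x+1)/(x-1))) =
          Option.some (((x+1)/(x-1)+1)/((x+1)/(x-1)-1)) from if_neg hne]
      congr 1
      rw [div_add' _ _ _ hx1, div_sub' hx1]
      rw [show x + 1 + 1 * (x-1) = 2*x by ring, show x + 1 - (x-1)*1 = 2 by ring]
      rw [div_div_div_cancel_right₀ hx1]
      exact mul_div_cancel_left₀ x h2

lemma conj (h3 : (3:F) = 0) (x : OnePoint F) :
    psi F (theta F x) = sMap F (psi F x) := by
  have h2 : (2:F) ≠ 0 := fun h => one_ne_zero (α := F) (by linear_combination h3 - h)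
  have h21 : (2:F) ≠ 1 := fun h => h2 (by linear_combination h3 - h)
  match x with
  | Option.none =>
    show psi F ∞ = sMap F (Option.some 1)
    simp only [psi, sMap]
    exact (congrArg _ (by norm_num)).trans (if_neg (one_ne_zero (α := F))).symm
  | Option.some x =>
    by_cases h0 : x = 0
    · subst h0
      have l1 : theta F (Option.some (0:F)) = ∞ := by simp [theta]
      have l2 : psi F ∞ = Option.some 1 := rfl
      have l3 : psi F (Option.some (0:F)) = Option.some (-1) := by
        simp only [psi]; refine (if_neg (zero_ne_one (α := F))).trans (congrArg _ ?_)
        norm_num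
      have l4 : sMap F (Option.some (-1:F)) = Option.some 1 := by
        simp only [sMap]; refine (if_neg (neg_ne_zero.mpr (one_ne_zero (α := F)))).trans (congrArg _ ?_)
        norm_num
      rw [l1, l2, l3, l4]
    by_cases h1 : x = 1
    · subst h1
      have l1 : theta F (Option.some (1:F)) = Option.some 2 := by
        simp only [theta]; refine (if_neg (one_ne_zero (α := F))).trans (congrArg _ ?_)
        norm_num
      have l2 : psi F (Option.some (2:F)) = Option.some 0 := by
        simp only [psi]; refine (if_neg h21).trans ?_
        congr 1
        rw [show (2:F)+1 = 3 by ring, h3, zero_div]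
      have l3 : psi F (Option.some (1:F)) = ∞ := by simp [psi]
      have l4 : sMap F ∞ = Option.some 0 := rfl
      rw [l1, l2, l3, l4]
    by_cases hm1 : x = -1
    · subst hm1
      have hn0 : (-1:F) ≠ 0 := neg_ne_zero.mpr one_ne_zero
      have hn1 : (-1:F) ≠ 1 := fun h => h2 (by linear_combination -h)
      have l1 : theta F (Option.some (-1:F)) = Option.some 1 := by
        simp only [theta]; refine (if_neg hn0).trans ?_
        congr 1
        rw [show (-1:F)⁻¹ = -1 by norm_num]
        linear_combination -h3
      have l2 : psi F (Option.some (1:F)) = ∞ := by simp [psi]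
      have l3 : psi F (Option.some (-1:F)) = Option.some 0 := by
        simp only [psi]; refine (if_neg hn1).trans (congrArg _ ?_)
        norm_num
      have l4 : sMap F (Option.some (0:F)) = ∞ := by simp [sMap]
      rw [l1, l2, l3, l4]
    · -- generic case
      have hx1 : x - 1 ≠ 0 := sub_ne_zero.mpr h1
      have hxm1 : x + 1 ≠ 0 := fun h => hm1 (by linear_combination h)
      have hpsi0 : (x+1)/(x-1) ≠ 0 := div_ne_zero hxm1 hx1
      have hθ : x + x⁻¹ ≠ 1 := by
        intro h
        have hxx : x * x + 1 = x := by field_simp at h; linear_combination h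
        have : (x+1)^2 = 0 := by linear_combination hxx + x * h3
        exact hxm1 (pow_eq_zero_iff two_ne_zero |>.mp this)
      have l1 : theta F (Option.some x) = Option.some (x + x⁻¹) := by
        simp only [theta]; exact if_neg h0
      have l2 : psi F (Option.some (x + x⁻¹)) = Option.some ((x + x⁻¹ + 1)/(x + x⁻¹ - 1)) := by
        simp only [psi]; exact if_neg hθ
      have l3 : psi F (Option.some x) = Option.some ((x+1)/(x-1)) := by
        simp only [psi]; exact if_neg h1
      have l4 : sMap F (Option.some ((x+1)/(x-1))) = Option.some ((((x+1)/(x-1))⁻¹)^2) := by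
        simp only [sMap]; exact if_neg hpsi0
      rw [l1, l2, l3, l4]
      congr 1
      rw [inv_div, div_pow]
      rw [div_eq_div_iff]
      · field_simp
        ring_nf
        linear_combination (2*x + 2*x^3) * h3
      · intro h
        have hx2 : x + x⁻¹ - 1 = 0 := h
        exact hθ (by linear_combination hx2)
      · exact pow_ne_zero 2 hxm1

lemma conj_iter (h3 : (3:F) = 0) (k : ℕ) (x : OnePoint F) :
    psi F ((theta F)^[k] x) = (sMap F)^[k] (psi F x) := by
  induction k generalizing x with
  | zero => rfl
  | succ k ih =>
    rw [Function.iterate_succ_apply', Function.iterate_succ_apply', conj h3, ih]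

lemma sMap_iter (k : ℕ) (c : F) (hc : c ≠ 0) :
    (sMap F)^[k] (Option.some c) = Option.some (c ^ ((-2:ℤ)^k)) := by
  induction k with
  | zero => simp; rfl
  | succ k ih =>
    refine (Function.iterate_succ_apply' (sMap F) k _).trans ?_
    refine (congrArg (sMap F) ih).trans ?_
    have hck : c ^ ((-2:ℤ)^k) ≠ 0 := zpow_ne_zero _ hc
    simp only [sMap]; refine (if_neg hck).trans ?_
    congr 1
    rw [← zpow_natCast ((c ^ ((-2:ℤ)^k))⁻¹) 2, ← zpow_neg, ← zpow_mul]
    congr 1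
    ring

lemma crit_mp {u : Fˣ} {k : ℕ} (hk : 0 < k) (h : (u:F) ^ ((-2:ℤ)^k) = (u:F)) :
    Odd (orderOf (u:F)) := by
  rw [orderOf_units]
  have h' : u ^ ((-2:ℤ)^k) = u := by
    ext
    rw [Units.val_zpow_eq_zpow_val]
    exact h
  have hd : (orderOf u : ℤ) ∣ (-2)^k - 1 := by
    rw [orderOf_dvd_iff_zpow_eq_one, zpow_sub, h', zpow_one]
    exact mul_inv_cancel u
  have hodd : Odd ((-2:ℤ)^k - 1) :=
    (Even.pow_of_ne_zero (by decide) hk.ne').sub_odd odd_one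
  rcases Nat.even_or_odd (orderOf u) with he | ho
  · exfalso
    have h2 : (2:ℤ) ∣ (-2:ℤ)^k - 1 :=
      dvd_trans (Int.natCast_dvd_natCast.mpr he.two_dvd) hd
    rw [← Int.not_even_iff_odd] at hodd
    obtain ⟨t, ht⟩ := h2
    exact hodd ⟨t, by omega⟩
  · exact ho

lemma crit_mpr [Fintype F] {u : Fˣ} (hodd : Odd (orderOf u)) :
    ∃ k : ℕ, 0 < k ∧ (u:F) ^ ((-2:ℤ)^k) = (u:F) := by
  have hpos : 0 < orderOf u := orderOf_pos u
  set m := orderOf u with hm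
  haveI : NeZero m := ⟨hpos.ne'⟩
  have h2u : IsUnit (-2 : ZMod m) := by
    have h1 : IsUnit ((2:ℕ) : ZMod m) := (ZMod.isUnit_iff_coprime 2 m).mpr hodd.coprime_two_left
    push_cast at h1
    exact h1.neg
  obtain ⟨w, hw⟩ := h2u
  refine ⟨orderOf w, orderOf_pos w, ?_⟩
  have hw1 : (-2 : ZMod m)^(orderOf w) = 1 := by
    rw [← hw, ← Units.val_pow_eq_pow_val, pow_orderOf_eq_one, Units.val_one]
  have hd : (m:ℤ) ∣ (-2:ℤ)^(orderOf w) - 1 := by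
    apply (ZMod.intCast_zmod_eq_zero_iff_dvd _ m).mp
    push_cast
    rw [hw1]
    ring
  obtain ⟨t, ht⟩ := hd
  have hu0 : (u:F) ≠ 0 := u.ne_zero
  have he : (-2:ℤ)^(orderOf w) = 1 + m * t := by linarith
  rw [he, zpow_add₀ hu0, zpow_one, zpow_mul, zpow_natCast]
  have hum : ((u:F) ^ m) = 1 := by
    rw [← Units.val_pow_eq_pow_val, pow_orderOf_eq_one, Units.val_one]
  rw [hum, one_zpow, mul_one]

variable (F)

theorem preimages_of_periodic [Fintype F] (n : ℕ) (hn : 0 < n)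
    (hF : Fintype.card F = 3 ^ n)
    (α : F) (hα1 : α ≠ 1) (hα2 : α ≠ -1)
    (hαp : ∃ k : ℕ, 0 < k ∧ (theta F)^[k] (α : OnePoint F) = (α : OnePoint F)) :
    ∃ β₁ β₂ b₁ b₂ : F, β₁ ≠ β₂ ∧
      theta F (β₁ : OnePoint F) = (α : OnePoint F) ∧
      theta F (β₂ : OnePoint F) = (α : OnePoint F) ∧
      (∀ x : F, theta F (x : OnePoint F) = (α : OnePoint F) → x = β₁ ∨ x = β₂) ∧
      psi F (β₁ : OnePoint F) = (b₁ : OnePoint F) ∧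
      psi F (β₂ : OnePoint F) = (b₂ : OnePoint F) ∧
      Odd (orderOf b₁) ∧
      orderOf b₂ = 2 * orderOf b₁ ∧
      (∃ k : ℕ, 0 < k ∧ (theta F)^[k] (β₁ : OnePoint F) = (β₁ : OnePoint F)) ∧
      ¬ (∃ k : ℕ, 0 < k ∧ (theta F)^[k] (β₂ : OnePoint F) = (β₂ : OnePoint F)) := by
  have coe_eq : ∀ y : F, (y : OnePoint F) = Option.some y := fun _ => rfl
  -- characteristic 3
  have hchar : ringChar F = 3 := by
    obtain ⟨m, hp, hcard⟩ := FiniteField.card F (ringChar F)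
    have hdvd : ringChar F ∣ 3 ^ n := by
      rw [← hF, hcard]
      exact dvd_pow_self _ (by exact_mod_cast m.pos.ne')
    exact (Nat.prime_dvd_prime_iff_eq hp (by norm_num)).mp (hp.dvd_of_dvd_pow hdvd)
  haveI hc3 : CharP F 3 := hchar ▸ ringChar.charP F
  have h3 : (3:F) = 0 := by exact_mod_cast CharP.cast_eq_zero F 3
  have h2 : (2:F) ≠ 0 := fun h => one_ne_zero (α := F) (by linear_combination h3 - h)
  have hα1' : α - 1 ≠ 0 := sub_ne_zero.mpr hα1
  have hαn1 : α + 1 ≠ 0 := fun h => hα2 (by linear_combination h)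
  set a : F := (α+1)/(α-1) with ha_def
  have ha0 : a ≠ 0 := div_ne_zero hαn1 hα1'
  have ha1 : a ≠ 1 := by
    intro h
    rw [ha_def, div_eq_one_iff_eq hα1'] at h
    exact h2 (by linear_combination h)
  have hpsiα : psi F (Option.some α) = Option.some a := by simp only [psi]; exact if_neg hα1
  obtain ⟨k, hk, hiter⟩ := hαp
  rw [coe_eq] at hiter
  have hsa : (sMap F)^[k] (Option.some a) = Option.some a := by
    exact (congrArg (sMap F)^[k] hpsiα).symm.trans
      ((conj_iter h3 k _).symm.trans ((congrArg (psi F) hiter).trans hpsiα))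
  rw [sMap_iter k a ha0] at hsa
  have haz : a ^ ((-2:ℤ)^k) = a := Option.some.inj hsa
  set ua : Fˣ := Units.mk0 a ha0 with hua
  have hao : Odd (orderOf (ua : F)) := crit_mp hk (by simpa [hua] using haz)
  have hmodd : Odd (orderOf ua) := by rwa [orderOf_units] at hao
  set m := orderOf ua with hmdef
  set bu : Fˣ := ua⁻¹ ^ ((m+1)/2) with hbu
  set b : F := (bu : F) with hb
  have hb0 : b ≠ 0 := bu.ne_zero
  have hbusq : bu ^ 2 = ua⁻¹ := by
    rw [hbu, ← pow_mul]
    have hdvd2 : (m+1)/2*2 = m + 1 :=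
      Nat.div_mul_cancel (by obtain ⟨t, ht⟩ := hmodd; exact ⟨t+1, by omega⟩)
    rw [hdvd2, pow_succ]
    have hm1 : ua⁻¹ ^ m = 1 := by
      rw [hmdef, ← orderOf_inv ua]; exact pow_orderOf_eq_one _
    rw [hm1, one_mul]
  have hb2 : b ^ 2 = a⁻¹ := by
    rw [hb, ← Units.val_pow_eq_pow_val, hbusq]
    simp [hua]
  have hbodd : Odd (orderOf b) := by
    have hdvd : orderOf bu ∣ m := by
      rw [hbu]
      calc orderOf (ua⁻¹ ^ ((m+1)/2)) ∣ orderOf ua⁻¹ := orderOf_pow_dvd _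
      _ = m := by rw [orderOf_inv]
    rw [hb, orderOf_units]
    rcases Nat.even_or_odd (orderOf bu) with he | ho
    · exfalso
      have : (2:ℕ) ∣ m := dvd_trans he.two_dvd hdvd
      rw [← Nat.not_even_iff_odd] at hmodd
      exact hmodd (even_iff_two_dvd.mpr this)
    · exact ho
  have hbsq1 : b ^ 2 ≠ 1 := by
    intro h
    apply ha1
    rw [h] at hb2
    exact inv_eq_one.mp hb2.symm
  have hb1 : b - 1 ≠ 0 := fun h => hbsq1 (by rw [sub_eq_zero] at h; rw [h, one_pow])
  have hbn1 : b + 1 ≠ 0 := fun h => hbsq1 (by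
    have hbm : b = -1 := by linear_combination h
    rw [hbm]; ring)
  have hrel : (α+1) * b^2 = α - 1 := by
    rw [hb2, ha_def]
    field_simp
  set β₁ : F := (b+1)/(b-1) with hβ₁
  set β₂ : F := (b-1)/(b+1) with hβ₂
  have hβ₁0 : β₁ ≠ 0 := div_ne_zero hbn1 hb1
  have hβ₂0 : β₂ ≠ 0 := div_ne_zero hb1 hbn1
  have hsum : β₁ + β₂ = α := by
    rw [hβ₁, hβ₂, div_add_div _ _ hb1 hbn1, div_eq_iff (mul_ne_zero hb1 hbn1)]
    linear_combination (b^2+1)*h3 - hrel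
  have hprod : β₁ * β₂ = 1 := by
    rw [hβ₁, hβ₂, div_mul_div_comm, div_eq_one_iff_eq (mul_ne_zero hb1 hbn1)]
    ring
  have hβ₁inv : β₁⁻¹ = β₂ := inv_eq_of_mul_eq_one_right hprod
  have hβ₂inv : β₂⁻¹ = β₁ := inv_eq_of_mul_eq_one_right (by rw [mul_comm]; exact hprod)
  have ht1 : theta F (Option.some β₁) = Option.some α := by
    simp only [theta]; refine (if_neg hβ₁0).trans ?_
    rw [hβ₁inv, hsum]
  have ht2 : theta F (Option.some β₂) = Option.some α := by
    simp only [theta]; refine (if_neg hβ₂0).trans ?_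
    rw [hβ₂inv, add_comm, hsum]
  have hneq : β₁ ≠ β₂ := by
    intro h
    rw [hβ₁, hβ₂, div_eq_div_iff hb1 hbn1] at h
    apply hb0
    have h4 : (4:F) * b = 0 := by linear_combination h
    have h1b : (1:F) * b = 0 := by linear_combination h4 - b * h3
    simpa using h1b
  have huniq : ∀ x : F, theta F (Option.some x) = Option.some α → x = β₁ ∨ x = β₂ := by
    intro x hx
    by_cases hx0 : x = 0
    · exfalso
      rw [hx0] at hx
      simp only [theta, if_pos rfl] at hx
      exact OnePoint.infty_ne_coe α ((if_pos trivial).symm.trans hx)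
    · simp only [theta, if_neg hx0] at hx
      have hxx : x + x⁻¹ = α := Option.some.inj ((if_neg hx0).symm.trans hx)
      have hq : x*x + 1 = α * x := by
        field_simp at hxx
        linear_combination hxx
      have hz : (x - β₁) * (x - β₂) = 0 := by linear_combination hq - x*hsum + hprod
      rcases mul_eq_zero.mp hz with h | h
      · left; exact sub_eq_zero.mp h
      · right; exact sub_eq_zero.mp h
  have hβ₁1 : β₁ ≠ 1 := by
    intro h
    rw [hβ₁, div_eq_one_iff_eq hb1] at h
    exact h2 (by linear_combination h)
  have hβ₂1 : β₂ ≠ 1 := by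
    intro h
    rw [hβ₂, div_eq_one_iff_eq hbn1] at h
    exact h2 (by linear_combination -h)
  have hψ1 : psi F (Option.some β₁) = Option.some b := by
    simp only [psi]; refine (if_neg hβ₁1).trans ?_
    congr 1
    rw [hβ₁, div_add' _ _ _ hb1, div_sub' hb1]
    rw [show b+1+1*(b-1) = 2*b by ring, show b+1-(b-1)*1 = 2 by ring]
    rw [div_div_div_cancel_right₀ hb1]
    exact mul_div_cancel_left₀ b h2
  have hψ2 : psi F (Option.some β₂) = Option.some (-b) := by
    simp only [psi]; refine (if_neg hβ₂1).trans ?_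
    congr 1
    rw [hβ₂, div_add' _ _ _ hbn1, div_sub' hbn1]
    rw [show b-1+1*(b+1) = 2*b by ring, show b-1-(b+1)*1 = -2 by ring]
    rw [div_div_div_cancel_right₀ hbn1]
    rw [show (2:F)*b = (-2)*(-b) by ring]
    exact mul_div_cancel_left₀ (-b) (neg_ne_zero.mpr h2)
  have honeg : orderOf (-1 : F) = 2 := by
    rw [orderOf_neg_one, hchar]
    norm_num
  have hord2 : orderOf (-b) = 2 * orderOf b := by
    have hC : Commute (-1 : F) b := Commute.all _ _
    have hco : Nat.Coprime (orderOf (-1:F)) (orderOf b) := by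
      rw [honeg]
      exact hbodd.coprime_two_left
    have hmul := hC.orderOf_mul_eq_mul_orderOf_of_coprime hco
    rw [neg_one_mul] at hmul
    rw [hmul, honeg]
  have hper1 : ∃ k, 0 < k ∧ (theta F)^[k] (Option.some β₁) = Option.some β₁ := by
    obtain ⟨k', hk', hkeq⟩ := crit_mpr (u := bu) (by rwa [hb, orderOf_units] at hbodd)
    refine ⟨k', hk', ?_⟩
    have hs : (sMap F)^[k'] (Option.some b) = Option.some b := by
      rw [sMap_iter k' b hb0]
      exact congrArg _ hkeq
    have hmain : psi F ((theta F)^[k'] (Option.some β₁)) = psi F (Option.some β₁) := by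
      exact (conj_iter h3 k' _).trans ((congrArg _ hψ1).trans (hs.trans hψ1.symm))
    have hmain2 := congrArg (psi F) hmain
    exact (psi_invol h2 _).symm.trans (hmain2.trans (psi_invol h2 _))
  have hnper2 : ¬ ∃ k, 0 < k ∧ (theta F)^[k] (Option.some β₂) = Option.some β₂ := by
    rintro ⟨k', hk', hkeq⟩
    have hψiter : psi F ((theta F)^[k'] (Option.some β₂)) = psi F (Option.some β₂) := by
      rw [hkeq]
    replace hψiter := (sMap_iter k' (-b) (neg_ne_zero.mpr hb0)).symm.trans
      ((congrArg _ hψ2.symm).trans (((conj_iter h3 k' _).symm.trans hψiter).trans hψ2))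
    have hzz : (-b) ^ ((-2:ℤ)^k') = -b := Option.some.inj hψiter
    have hoddneg : Odd (orderOf ((-bu : Fˣ) : F)) := crit_mp (u := -bu) hk' (by
      simpa using hzz)
    simp only [Units.val_neg] at hoddneg
    rw [← hb, hord2] at hoddneg
    obtain ⟨t, ht⟩ := hoddneg
    omega
  exact ⟨β₁, β₂, b, -b, hneq, ht1, ht2, huniq, hψ1, hψ2, hbodd, hord2, hper1, hnper2⟩
end

section
/- Let 2^e ∥ 3^n − 1 and let β ∈ F_{3^n} be an element of the θ-graph at level k ≥ 1 above a θ-periodic root (i.e., θ^k(β) is θ-periodic but θ^{k−1}(β) is not, with θ^j(β) ∈ F_{3^n} \ {1,−1} for j < k). Then 2^k is the exact power of 2 dividing ord(ψ(β)), and in particular k ≤ e. -/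
open OnePoint

variable (F : Type*) [Field F] [DecidableEq F]

section Aux

variable {F}

lemma theta_coe (x : F) :
    theta F (x : OnePoint F) = if x = 0 then ∞ else ((x + x⁻¹ : F) : OnePoint F) := rfl

lemma sMap_coe (x : F) :
    sMap F (x : OnePoint F) = if x = 0 then ∞ else ((x⁻¹ ^ 2 : F) : OnePoint F) := rfl

lemma psi_coe (x : F) :
    psi F (x : OnePoint F) = if x = 1 then ∞ else (((x + 1) / (x - 1) : F) : OnePoint F) := rfl

lemma theta_infty : theta F ∞ = ∞ := rfl
lemma sMap_infty : sMap F ∞ = ((0 : F) : OnePoint F) := rfl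
lemma psi_infty : psi F ∞ = ((1 : F) : OnePoint F) := rfl

variable (h3 : (3 : F) = 0)
include h3

lemma neg_one_ne_one : (-1 : F) ≠ 1 := by
  intro h
  have : (2 : F) = 0 := by linear_combination -h
  have : (1 : F) = 0 := by linear_combination h3 - this
  exact one_ne_zero this

/-- The key conjugation identity `ψ ∘ θ = s ∘ ψ` in characteristic 3. -/
lemma psi_theta (x : OnePoint F) : psi F (theta F x) = sMap F (psi F x) := by
  cases x with
  | infty =>
      rw [theta_infty, psi_infty, sMap_coe, if_neg one_ne_zero]
      norm_num
  | coe x =>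
      by_cases hx0 : x = 0
      · subst hx0
        have l1 : theta F ((0 : F) : OnePoint F) = ∞ := by rw [theta_coe, if_pos rfl]
        have l2 : psi F ((0 : F) : OnePoint F) = ((-1 : F) : OnePoint F) := by
          rw [psi_coe, if_neg zero_ne_one]
          norm_num
        rw [l1, l2, psi_infty, sMap_coe, if_neg (neg_ne_zero.mpr one_ne_zero)]
        norm_num
      by_cases hx1 : x = 1
      · subst hx1
        have l1 : theta F ((1 : F) : OnePoint F) = ((2 : F) : OnePoint F) := by
          rw [theta_coe, if_neg one_ne_zero, inv_one]
          norm_num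
        have l2 : psi F ((1 : F) : OnePoint F) = ∞ := by rw [psi_coe, if_pos rfl]
        have h21 : (2 : F) ≠ 1 := by
          intro h; exact one_ne_zero (α := F) (by linear_combination h)
        have l3 : psi F ((2 : F) : OnePoint F) = ((0 : F) : OnePoint F) := by
          rw [psi_coe, if_neg h21]
          congr 1
          rw [div_eq_zero_iff]; left; linear_combination h3
        rw [l1, l3, l2, sMap_infty]
      by_cases hxm1 : x = -1
      · subst hxm1
        have hv : (-1 : F) + (-1)⁻¹ = 1 := by
          rw [inv_neg, inv_one]; linear_combination -h3
        have l1 : theta F ((-1 : F) : OnePoint F) = ((1 : F) : OnePoint F) := by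
          rw [theta_coe, if_neg (neg_ne_zero.mpr one_ne_zero), hv]
        have l2 : psi F ((1 : F) : OnePoint F) = ∞ := by rw [psi_coe, if_pos rfl]
        have l3 : psi F ((-1 : F) : OnePoint F) = ((0 : F) : OnePoint F) := by
          rw [psi_coe, if_neg (neg_one_ne_one h3)]
          congr 1
          rw [div_eq_zero_iff]; left; ring
        rw [l1, l2, l3, sMap_coe, if_pos rfl]
      -- generic case
      · have hden : x - 1 ≠ 0 := sub_ne_zero.mpr hx1
        have hnum : x + 1 ≠ 0 := by
          intro h; exact hxm1 (by linear_combination h)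
        have hb : (x + 1) / (x - 1) ≠ 0 := div_ne_zero hnum hden
        have hq : x ^ 2 - x + 1 ≠ 0 := by
          intro h
          apply hnum
          have h2 : (x + 1) ^ 2 = 0 := by linear_combination h + x * h3
          exact pow_eq_zero_iff two_ne_zero |>.mp h2
        have hth : x + x⁻¹ ≠ 1 := by
          intro h
          apply hq
          field_simp at h
          linear_combination h
        have l1 : theta F (x : OnePoint F) = ((x + x⁻¹ : F) : OnePoint F) := by
          rw [theta_coe, if_neg hx0]
        have l2 : psi F ((x + x⁻¹ : F) : OnePoint F) =
            (((x + x⁻¹ + 1) / (x + x⁻¹ - 1) : F) : OnePoint F) := by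
          rw [psi_coe, if_neg hth]
        have l3 : psi F (x : OnePoint F) = (((x + 1) / (x - 1) : F) : OnePoint F) := by
          rw [psi_coe, if_neg hx1]
        rw [l1, l2, l3, sMap_coe, if_neg hb]
        congr 1
        have hth1 : x + x⁻¹ - 1 ≠ 0 := by
          intro h
          apply hq
          have h' : x * (x + x⁻¹ - 1) = 0 := by rw [h, mul_zero]
          field_simp at h'
          linear_combination h'
        rw [inv_div, div_pow]
        rw [div_eq_div_iff hth1 (pow_ne_zero 2 hnum)]
        field_simp
        ring_nf
        linear_combination (2 * x ^ 3 + 2 * x) * h3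

omit h3

lemma myTwo_ne_zero (h3 : (3 : F) = 0) : (2 : F) ≠ 0 := by
  intro h
  exact one_ne_zero (α := F) (by linear_combination h3 - h)

/-- `ψ` is an involution (any characteristic other than 2). -/
lemma psi_psi (h2 : (2 : F) ≠ 0) (x : OnePoint F) : psi F (psi F x) = x := by
  cases x with
  | infty => rw [psi_infty, psi_coe, if_pos rfl]
  | coe x =>
      by_cases hx1 : x = 1
      · subst hx1; rw [psi_coe, if_pos rfl, psi_infty]
      · have hden : x - 1 ≠ 0 := sub_ne_zero.mpr hx1
        have hne : (x + 1) / (x - 1) ≠ 1 := by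
          intro h
          rw [div_eq_one_iff_eq hden] at h
          exact h2 (by linear_combination h)
        rw [psi_coe, if_neg hx1, psi_coe, if_neg hne]
        congr 1
        have hd2 : (x + 1) / (x - 1) - 1 ≠ 0 := sub_ne_zero.mpr hne
        field_simp
        rw [show x + 1 - (x - 1) = 1 + 1 by ring]
        rw [div_eq_iff (show (1 : F) + 1 ≠ 0 by intro h; exact h2 (by linear_combination h))]
        ring

lemma psi_injective (h2 : (2 : F) ≠ 0) : Function.Injective (psi F) :=
  Function.LeftInverse.injective (psi_psi h2)

lemma sMap_iter_unit (u : Fˣ) (j : ℕ) :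
    (sMap F)^[j] ((u : F) : OnePoint F) = (((u ^ ((-2 : ℤ) ^ j) : Fˣ) : F) : OnePoint F) := by
  induction j with
  | zero => simp
  | succ j ih =>
      rw [Function.iterate_succ_apply', ih, sMap_coe, if_neg (Units.ne_zero _)]
      have : (((u ^ ((-2 : ℤ) ^ j) : Fˣ) : F)⁻¹ ^ 2) = ((u ^ ((-2 : ℤ) ^ (j + 1)) : Fˣ) : F) := by
        push_cast
        rw [← zpow_natCast (((u : F) ^ ((-2:ℤ)^j))⁻¹) 2, ← zpow_neg_one ((u:F) ^ ((-2:ℤ)^j)),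
          ← zpow_mul, ← zpow_mul]
        congr 1
        push_cast; ring
      rw [this]

lemma orderOf_neg_two_pow [Fintype F] (u : Fˣ) (j : ℕ) :
    orderOf (u ^ ((-2 : ℤ) ^ j)) = orderOf u / Nat.gcd (orderOf u) (2 ^ j) := by
  have h : u ^ ((-2 : ℤ) ^ j) = (u ^ (2 ^ j : ℕ)) ^ ((-1 : ℤ) ^ j) := by
    rw [← zpow_natCast u (2 ^ j), ← zpow_mul]
    congr 1
    push_cast
    rw [← mul_pow]
    norm_num
  rw [h]
  rcases Nat.even_or_odd j with hj | hj
  · rw [hj.neg_one_pow, zpow_one, orderOf_pow]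
  · rw [hj.neg_one_pow, zpow_neg_one, orderOf_inv, orderOf_pow]

/-- Periodicity under `sMap` for a unit is equivalent to odd order. -/
lemma sMap_periodic_iff [Fintype F] (u : Fˣ) :
    (∃ m : ℕ, 0 < m ∧ (sMap F)^[m] ((u : F) : OnePoint F) = ((u : F) : OnePoint F)) ↔
      Odd (orderOf u) := by
  constructor
  · rintro ⟨m, hm, heq⟩
    rw [sMap_iter_unit] at heq
    have : (u ^ ((-2 : ℤ) ^ m) : Fˣ) = u :=
      Units.ext (OnePoint.coe_injective heq)
    have hdvd : ((orderOf u : ℤ)) ∣ ((-2 : ℤ) ^ m - 1) := by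
      rw [orderOf_dvd_iff_zpow_eq_one, zpow_sub, zpow_one, this, mul_inv_cancel]
    rw [Nat.odd_iff]
    rcases Nat.even_or_odd (orderOf u) with hev | hodd
    swap
    · exact Nat.odd_iff.mp hodd
    exfalso
    obtain ⟨t, ht⟩ := hev
    have h2n : (2 : ℤ) ∣ (orderOf u : ℤ) := ⟨t, by rw [ht]; push_cast; ring⟩
    have h2' : (2 : ℤ) ∣ ((-2 : ℤ) ^ m - 1) := dvd_trans h2n hdvd
    have h2'' : (2 : ℤ) ∣ (-2 : ℤ) ^ m :=
      dvd_trans ⟨-1, by ring⟩ (dvd_pow_self (-2 : ℤ) hm.ne')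
    have : (2 : ℤ) ∣ 1 := by
      have := dvd_sub h2'' h2'
      simpa using this
    norm_num at this
  · intro hodd
    have hd : 0 < orderOf u := orderOf_pos u
    set d := orderOf u with hdd
    have hcop : Nat.Coprime 4 d := by
      have h2 : Nat.Coprime 2 d := (Nat.prime_two.coprime_iff_not_dvd).mpr
        (by rw [Nat.odd_iff] at hodd; omega)
      exact (show (4:ℕ) = 2 ^ 2 by norm_num) ▸ h2.pow_left 2
    have hmod : 4 ^ d.totient ≡ 1 [MOD d] := Nat.ModEq.pow_totient hcop
    refine ⟨2 * d.totient, by have h := Nat.totient_pos.mpr hd; omega, ?_⟩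
    rw [sMap_iter_unit]
    have : (u ^ ((-2 : ℤ) ^ (2 * d.totient)) : Fˣ) = u := by
      have h1 : ((-2 : ℤ)) ^ (2 * d.totient) = ((4 ^ d.totient : ℕ) : ℤ) := by
        push_cast
        rw [pow_mul]
        norm_num
      rw [h1, zpow_natCast]
      calc u ^ (4 ^ d.totient) = u ^ 1 := by
            rw [pow_eq_pow_iff_modEq]; exact hmod
        _ = u := pow_one u
    rw [this]

/-- Arithmetic: `d / gcd(d, 2^j)` is odd iff `v₂(d) ≤ j`. -/
lemma odd_div_gcd_iff {d : ℕ} (hd : d ≠ 0) (j : ℕ) :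
    Odd (d / Nat.gcd d (2 ^ j)) ↔ d.factorization 2 ≤ j := by
  have hg : Nat.gcd d (2 ^ j) ≠ 0 := Nat.gcd_ne_zero_left hd
  have hgdvd : Nat.gcd d (2 ^ j) ∣ d := Nat.gcd_dvd_left d (2 ^ j)
  have hq : d / Nat.gcd d (2 ^ j) ≠ 0 :=
    Nat.div_ne_zero_iff_of_dvd hgdvd |>.mpr ⟨hd, hg⟩
  have hfact : (d / Nat.gcd d (2 ^ j)).factorization 2 =
      d.factorization 2 - min (d.factorization 2) j := by
    rw [Nat.factorization_div hgdvd]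
    simp only [Finsupp.coe_tsub, Pi.sub_apply]
    rw [Nat.factorization_gcd hd (by positivity)]
    simp only [Finsupp.inf_apply]
    rw [Nat.Prime.factorization_pow Nat.prime_two]
    simp
  have h2dvd : 2 ∣ d / Nat.gcd d (2 ^ j) ↔ 1 ≤ (d / Nat.gcd d (2 ^ j)).factorization 2 := by
    rw [← Nat.Prime.pow_dvd_iff_le_factorization Nat.prime_two hq, pow_one]
  rcases Nat.even_or_odd (d / Nat.gcd d (2 ^ j)) with hev | hodd
  · have := h2dvd.mp hev.two_dvd
    rw [hfact] at this
    constructor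
    · intro h; exact absurd h (Nat.not_odd_iff_even.mpr hev)
    · intro h; omega
  · have : ¬ 2 ∣ d / Nat.gcd d (2 ^ j) := by rw [Nat.odd_iff] at hodd; omega
    rw [h2dvd, hfact] at this
    constructor
    · intro _; omega
    · intro _; exact hodd

end Aux

theorem level_k_order [Fintype F] (n : ℕ) (hn : 0 < n)
    (hF : Fintype.card F = 3 ^ n) (e : ℕ)
    (he : 2 ^ e ∣ 3 ^ n - 1 ∧ ¬ 2 ^ (e + 1) ∣ 3 ^ n - 1)
    (β : F) (k : ℕ) (hk : 1 ≤ k)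
    (hper : ∃ m : ℕ, 0 < m ∧
      (theta F)^[m] ((theta F)^[k] (β : OnePoint F)) = (theta F)^[k] (β : OnePoint F))
    (hnper : ¬ ∃ m : ℕ, 0 < m ∧
      (theta F)^[m] ((theta F)^[k - 1] (β : OnePoint F)) =
        (theta F)^[k - 1] (β : OnePoint F))
    (hfield : ∀ j : ℕ, j < k → ∃ c : F, (theta F)^[j] (β : OnePoint F) = (c : OnePoint F) ∧
      c ≠ 1 ∧ c ≠ -1) :
    (∃ b : F, psi F (β : OnePoint F) = (b : OnePoint F) ∧
      2 ^ k ∣ orderOf b ∧ ¬ 2 ^ (k + 1) ∣ orderOf b) ∧ k ≤ e := by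
  -- characteristic 3
  have h3 : (3 : F) = 0 := by
    have hcard : ((Fintype.card F : F)) = 0 := FiniteField.cast_card_eq_zero F
    rw [hF] at hcard
    push_cast at hcard
    exact pow_eq_zero_iff hn.ne' |>.mp hcard
  have h2 : (2 : F) ≠ 0 := myTwo_ne_zero h3
  -- β ≠ ±1
  obtain ⟨c, hc, hc1, hcm1⟩ := hfield 0 hk
  simp only [Function.iterate_zero_apply] at hc
  have hβc : β = c := OnePoint.coe_injective hc
  subst hβc
  have hden : β - 1 ≠ 0 := sub_ne_zero.mpr hc1
  have hnum : β + 1 ≠ 0 := by intro h; exact hcm1 (by linear_combination h)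
  set b : F := (β + 1) / (β - 1) with hb
  have hb0 : b ≠ 0 := div_ne_zero hnum hden
  set u : Fˣ := Units.mk0 b hb0 with hu
  have hpsiβ : psi F (β : OnePoint F) = ((u : F) : OnePoint F) := by
    rw [psi_coe, if_neg hc1]; rfl
  -- conjugation of iterates
  have hconj : ∀ j : ℕ, psi F ((theta F)^[j] (β : OnePoint F)) =
      (sMap F)^[j] (psi F (β : OnePoint F)) := by
    intro j
    induction j with
    | zero => simp
    | succ j ih =>
        rw [Function.iterate_succ_apply', Function.iterate_succ_apply', psi_theta h3, ih]
  -- translate periodicity at level j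
  have htrans : ∀ j : ℕ,
      ((∃ m : ℕ, 0 < m ∧ (theta F)^[m] ((theta F)^[j] (β : OnePoint F)) =
          (theta F)^[j] (β : OnePoint F)) ↔
        Odd (orderOf (u ^ ((-2 : ℤ) ^ j)))) := by
    intro j
    rw [← sMap_periodic_iff]
    constructor
    · rintro ⟨m, hm, heq⟩
      refine ⟨m, hm, ?_⟩
      have h1 : psi F ((theta F)^[m] ((theta F)^[j] (β : OnePoint F))) =
          psi F ((theta F)^[j] (β : OnePoint F)) := by rw [heq]
      rw [← Function.iterate_add_apply] at h1
      rw [hconj (m + j), hconj j, hpsiβ, Function.iterate_add_apply] at h1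
      rw [sMap_iter_unit] at h1 ⊢
      rw [sMap_iter_unit] at h1
      exact h1
    · rintro ⟨m, hm, heq⟩
      refine ⟨m, hm, ?_⟩
      apply psi_injective h2
      rw [← Function.iterate_add_apply, hconj (m + j), hconj j, hpsiβ,
        Function.iterate_add_apply]
      rw [sMap_iter_unit] at heq ⊢
      rw [sMap_iter_unit]
      exact heq
  -- orders
  set d := orderOf u with hd
  have hd0 : d ≠ 0 := (orderOf_pos u).ne'
  set a := d.factorization 2 with ha
  have hk' : Odd (d / Nat.gcd d (2 ^ k)) := by
    have := (htrans k).mp hper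
    rwa [orderOf_neg_two_pow] at this
  have hk'' : ¬ Odd (d / Nat.gcd d (2 ^ (k - 1))) := by
    intro h
    apply hnper
    rw [htrans (k - 1), orderOf_neg_two_pow]
    exact h
  rw [odd_div_gcd_iff hd0] at hk'
  rw [odd_div_gcd_iff hd0] at hk''
  have hak : a = k := by omega
  have hob : orderOf b = d := by
    rw [hd, hu, ← orderOf_units, Units.val_mk0]
  have hdvd1 : 2 ^ k ∣ d := by
    rw [Nat.Prime.pow_dvd_iff_le_factorization Nat.prime_two hd0, ← ha, hak]
  have hdvd2 : ¬ 2 ^ (k + 1) ∣ d := by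
    rw [Nat.Prime.pow_dvd_iff_le_factorization Nat.prime_two hd0, ← ha, hak]
    omega
  have hdcard : d ∣ 3 ^ n - 1 := by
    have := orderOf_dvd_card (x := u)
    rwa [Fintype.card_units, hF] at this
  refine ⟨⟨b, ?_, ?_, ?_⟩, ?_⟩
  · rw [hpsiβ]; rfl
  · rw [hob]; exact hdvd1
  · rw [hob]; exact hdvd2
  · by_contra hke
    push_neg at hke
    apply he.2
    exact dvd_trans (pow_dvd_pow 2 (by omega)) (dvd_trans hdvd1 hdcard)
end
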